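/- Let f : ℝ^d → ℝ be convex and differentiable with L-Lipschitz gradient (L > 0), let R ⊆ ℝ^d be a nonempty closed convex set, let θ ∈ R, let ξ ∈ ℝ^d, set G = ∇f(θ) + ξ, let 0 < β < 1/L, and let θ⁺ = argmin_{z ∈ R} ( β⟨G, z − θ⟩ + (1/2)‖z − θ‖₂² ). Then for every u ∈ R, β·f(θ⁺) ≤ β·f(u) + β⟨ξ, u − θ⟩ + (1/2)‖u − θ‖₂² − (1/2)‖u − θ⁺‖₂² + β²‖ξ‖₂² / (2(1 − Lβ)). -/

import Mathlib

open RealInnerProductSpace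



variable {d : ℕ}

lemma lineMap_hasDerivAt {f : EuclideanSpace ℝ (Fin d) → ℝ} (hdiff : Differentiable ℝ f)
    (x y : EuclideanSpace ℝ (Fin d)) (t : ℝ) :
    HasDerivAt (fun s : ℝ => f (x + s • (y - x)))
      ⟪gradient f (x + t • (y - x)), y - x⟫ t := by
  have hline : HasDerivAt (fun s : ℝ => x + s • (y - x)) (y - x) t := by
    simpa using ((hasDerivAt_id t).smul_const (y - x)).const_add x
  have hf := ((hdiff (x + t • (y - x))).hasGradientAt).hasFDerivAt
  have := hf.comp_hasDerivAt t hline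
  simpa [InnerProductSpace.toDual_apply_apply, Function.comp_def] using this

lemma convex_grad_ineq {f : EuclideanSpace ℝ (Fin d) → ℝ}
    (hconv : ConvexOn ℝ Set.univ f) (hdiff : Differentiable ℝ f)
    (x y : EuclideanSpace ℝ (Fin d)) :
    f x + ⟪gradient f x, y - x⟫ ≤ f y := by
  set g : ℝ → ℝ := fun s => f (x + s • (y - x)) with hg
  have hgconv : ConvexOn ℝ Set.univ g := by
    have := hconv.comp_affineMap
      (AffineMap.lineMap x y : ℝ →ᵃ[ℝ] EuclideanSpace ℝ (Fin d))
    have he : g = f ∘ (AffineMap.lineMap x y : ℝ →ᵃ[ℝ] EuclideanSpace ℝ (Fin d)) := by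
      funext s
      simp only [hg, Function.comp_apply, AffineMap.lineMap_apply, vsub_eq_sub, vadd_eq_add,
        add_comm]
    rw [he]
    simpa using this
  have hd0 : HasDerivAt g ⟪gradient f x, y - x⟫ 0 := by
    simpa using lineMap_hasDerivAt hdiff x y 0
  have := hgconv.le_slope_of_hasDerivAt (Set.mem_univ (0:ℝ)) (Set.mem_univ 1)
    one_pos hd0
  rw [slope_def_field] at this
  have h0 : g 0 = f x := by simp [hg]
  have h1 : g 1 = f y := by simp [hg]
  rw [h0, h1] at this
  linarith [this]

lemma descent_lemma {f : EuclideanSpace ℝ (Fin d) → ℝ} {L : ℝ} (hL : 0 < L)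
    (hdiff : Differentiable ℝ f)
    (hlip : ∀ x y, ‖gradient f x - gradient f y‖ ≤ L * ‖x - y‖)
    (x y : EuclideanSpace ℝ (Fin d)) :
    f y ≤ f x + ⟪gradient f x, y - x⟫ + L / 2 * ‖y - x‖ ^ 2 := by
  have hgradcont : Continuous (gradient f) := by
    have : LipschitzWith (Real.toNNReal L) (gradient f) := by
      apply LipschitzWith.of_dist_le_mul
      intro a b
      rw [dist_eq_norm, dist_eq_norm, Real.coe_toNNReal L hL.le]
      exact hlip a b
    exact this.continuous
  set g : ℝ → ℝ := fun s => f (x + s • (y - x)) with hg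
  set g' : ℝ → ℝ := fun s => ⟪gradient f (x + s • (y - x)), y - x⟫ with hg'
  have hderiv : ∀ t ∈ Set.uIcc (0:ℝ) 1, HasDerivAt g (g' t) t :=
    fun t _ => lineMap_hasDerivAt hdiff x y t
  have hcont : Continuous g' := by
    apply Continuous.inner
    · exact hgradcont.comp (continuous_const.add (continuous_id.smul continuous_const))
    · exact continuous_const
  have hint : IntervalIntegrable g' MeasureTheory.volume 0 1 :=
    hcont.intervalIntegrable 0 1
  have heq : ∫ t in (0:ℝ)..1, g' t = g 1 - g 0 :=
    intervalIntegral.integral_eq_sub_of_hasDerivAt hderiv hint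
  have hbound : ∀ t ∈ Set.Icc (0:ℝ) 1,
      g' t ≤ ⟪gradient f x, y - x⟫ + L * ‖y - x‖ ^ 2 * t := by
    intro t ht
    have h1 : g' t - ⟪gradient f x, y - x⟫ =
        ⟪gradient f (x + t • (y - x)) - gradient f x, y - x⟫ := by
      rw [inner_sub_left]
    have h2 : ⟪gradient f (x + t • (y - x)) - gradient f x, y - x⟫ ≤
        ‖gradient f (x + t • (y - x)) - gradient f x‖ * ‖y - x‖ :=
      real_inner_le_norm _ _
    have h3 : ‖gradient f (x + t • (y - x)) - gradient f x‖ ≤ L * ‖t • (y - x)‖ := by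
      simpa using hlip (x + t • (y - x)) x
    have h4 : ‖t • (y - x)‖ = t * ‖y - x‖ := by
      rw [norm_smul, Real.norm_eq_abs, abs_of_nonneg ht.1]
    rw [h4] at h3
    have h5 := mul_le_mul_of_nonneg_right h3 (norm_nonneg (y - x))
    have h6 : L * (t * ‖y - x‖) * ‖y - x‖ = L * ‖y - x‖ ^ 2 * t := by ring
    linarith
  have hmono : ∫ t in (0:ℝ)..1, g' t ≤
      ∫ t in (0:ℝ)..1, (⟪gradient f x, y - x⟫ + L * ‖y - x‖ ^ 2 * t) := by
    apply intervalIntegral.integral_mono_on zero_le_one hint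
    · exact (Continuous.intervalIntegrable
        (continuous_const.add (continuous_const.mul continuous_id)) 0 1)
    · exact hbound
  have hrhs : ∫ t in (0:ℝ)..1, (⟪gradient f x, y - x⟫ + L * ‖y - x‖ ^ 2 * t) =
      ⟪gradient f x, y - x⟫ + L / 2 * ‖y - x‖ ^ 2 := by
    have hI2 : IntervalIntegrable (fun t : ℝ => L * ‖y - x‖ ^ 2 * t)
        MeasureTheory.volume 0 1 :=
      (continuous_const.mul continuous_id).intervalIntegrable 0 1
    rw [intervalIntegral.integral_add intervalIntegrable_const hI2,
      intervalIntegral.integral_const_mul, integral_id]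
    norm_num
    ring
  have h0 : g 0 = f x := by simp [hg]
  have h1 : g 1 = f y := by simp [hg]
  rw [heq, h0, h1] at hmono
  rw [hrhs] at hmono
  linarith

theorem stmt18 {d : ℕ} (f : EuclideanSpace ℝ (Fin d) → ℝ) (L : ℝ) (hL : 0 < L)
    (hconv : ConvexOn ℝ Set.univ f) (hdiff : Differentiable ℝ f)
    (hlip : ∀ x y, ‖gradient f x - gradient f y‖ ≤ L * ‖x - y‖)
    (R : Set (EuclideanSpace ℝ (Fin d)))
    (hne : R.Nonempty) (hcl : IsClosed R) (hconvR : Convex ℝ R)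
    (θ : EuclideanSpace ℝ (Fin d)) (hθ : θ ∈ R) (ξ : EuclideanSpace ℝ (Fin d))
    (β : ℝ) (hβ1 : 0 < β) (hβ2 : β < 1 / L)
    (θp : EuclideanSpace ℝ (Fin d)) (hθp : θp ∈ R)
    (hmin : ∀ z ∈ R,
      β * ⟪gradient f θ + ξ, θp - θ⟫ + (1 / 2) * ‖θp - θ‖ ^ 2 ≤
        β * ⟪gradient f θ + ξ, z - θ⟫ + (1 / 2) * ‖z - θ‖ ^ 2) :
    ∀ u ∈ R,
      β * f θp ≤ β * f u + β * ⟪ξ, u - θ⟫ + (1 / 2) * ‖u - θ‖ ^ 2 -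
        (1 / 2) * ‖u - θp‖ ^ 2 + β ^ 2 * ‖ξ‖ ^ 2 / (2 * (1 - L * β)) := by
  intro u hu
  have hLβ : L * β < 1 := by
    rw [lt_div_iff₀ hL] at hβ2; linarith [hβ2]
  have hc : 0 < 1 - L * β := by linarith
  set G := gradient f θ + ξ with hG
  -- Variational inequality
  have hVI : 0 ≤ β * ⟪G, u - θp⟫ + ⟪θp - θ, u - θp⟫ := by
    set A := β * ⟪G, u - θp⟫ + ⟪θp - θ, u - θp⟫ with hA
    set C := ‖u - θp‖ ^ 2 with hC
    have key : ∀ t : ℝ, 0 < t → t ≤ 1 → 0 ≤ t * A + t ^ 2 / 2 * C := by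
      intro t ht0 ht1
      have hz : θp + t • (u - θp) ∈ R := by
        have := hconvR hθp hu (by linarith : (0:ℝ) ≤ 1 - t) ht0.le (by ring)
        convert this using 1
        module
      have h := hmin _ hz
      have hexp1 : ⟪G, θp + t • (u - θp) - θ⟫ = ⟪G, θp - θ⟫ + t * ⟪G, u - θp⟫ := by
        have he : θp + t • (u - θp) - θ = (θp - θ) + t • (u - θp) := by module
        rw [he, inner_add_right, real_inner_smul_right]
      have hexp2 : ‖θp + t • (u - θp) - θ‖ ^ 2 =
          ‖θp - θ‖ ^ 2 + 2 * (t * ⟪θp - θ, u - θp⟫) + t ^ 2 * ‖u - θp‖ ^ 2 := by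
        have he : θp + t • (u - θp) - θ = (θp - θ) + t • (u - θp) := by module
        rw [he, norm_add_sq_real, real_inner_smul_right, norm_smul, Real.norm_eq_abs,
          mul_pow, sq_abs]
      rw [hexp1, hexp2] at h
      rw [hA, hC]
      linarith [h]
    by_contra hneg
    push_neg at hneg
    have hC0 : 0 ≤ C := by rw [hC]; positivity
    rcases eq_or_lt_of_le hC0 with hC0' | hC0'
    · have h1 := key 1 one_pos le_rfl
      rw [← hC0'] at h1
      linarith
    · set t := min 1 (-A / C) with htdef
      have ht0 : 0 < t := lt_min one_pos (div_pos (neg_pos.mpr hneg) hC0')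
      have ht1 : t ≤ 1 := min_le_left _ _
      have ht2 : t ≤ -A / C := min_le_right _ _
      have hk := key t ht0 ht1
      have h5 : t * C ≤ -A := by
        rw [le_div_iff₀ hC0'] at ht2; linarith
      have h6 := mul_le_mul_of_nonneg_left h5 ht0.le
      have h7 := mul_pos ht0 (neg_pos.mpr hneg)
      nlinarith [hk, h6, h7]
  -- three point identity
  have h3pt : ⟪θp - θ, u - θp⟫ =
      (1/2) * ‖u - θ‖ ^ 2 - (1/2) * ‖u - θp‖ ^ 2 - (1/2) * ‖θp - θ‖ ^ 2 := by
    have he : u - θ = (u - θp) + (θp - θ) := by module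
    rw [he, norm_add_sq_real, real_inner_comm]
    ring
  have hdesc := descent_lemma hL hdiff hlip θ θp
  have hcvx := convex_grad_ineq hconv hdiff θ u
  have hdec : ⟪G, u - θp⟫ = ⟪gradient f θ, u - θ⟫ - ⟪gradient f θ, θp - θ⟫
      + ⟪ξ, u - θ⟫ - ⟪ξ, θp - θ⟫ := by
    have he : u - θp = (u - θ) - (θp - θ) := by module
    rw [hG, he, inner_sub_right, inner_add_left, inner_add_left]
    ring
  have hcs : -⟪ξ, θp - θ⟫ ≤ ‖ξ‖ * ‖θp - θ‖ := by
    have h := real_inner_le_norm ξ (θ - θp)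
    have he : ⟪ξ, θ - θp⟫ = -⟪ξ, θp - θ⟫ := by
      rw [← inner_neg_right]; congr 1; module
    rw [he, norm_sub_rev θ θp] at h
    exact h
  have h2c : (0:ℝ) < 2 * (1 - L * β) := by linarith
  have hyoung : β * (‖ξ‖ * ‖θp - θ‖) ≤
      β ^ 2 * ‖ξ‖ ^ 2 / (2 * (1 - L * β)) + (1 - L * β) / 2 * ‖θp - θ‖ ^ 2 := by
    have key : β * (‖ξ‖ * ‖θp - θ‖) * (2 * (1 - L * β)) ≤
        (β ^ 2 * ‖ξ‖ ^ 2 / (2 * (1 - L * β)) + (1 - L * β) / 2 * ‖θp - θ‖ ^ 2)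
          * (2 * (1 - L * β)) := by
      rw [add_mul, div_mul_cancel₀ _ (ne_of_gt h2c)]
      nlinarith [sq_nonneg (β * ‖ξ‖ - (1 - L * β) * ‖θp - θ‖)]
    exact le_of_mul_le_mul_right key h2c
  rw [hdec, h3pt] at hVI
  have d1 := mul_le_mul_of_nonneg_left hdesc hβ1.le
  have d2 := mul_le_mul_of_nonneg_left hcvx hβ1.le
  have d3 := mul_le_mul_of_nonneg_left hcs hβ1.le
  linarith [hVI, d1, d2, d3, hyoung]
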